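/- Let H be a k-uniform hypergraph that is balanced partially bipartite: there is a partition V = V_0 ∪ V_1 ∪ V_2 with V_1, V_2 nonempty and a constant c > 0 such that every edge e ⊄ V_0 satisfies |e∩V_1|/|e∩V_2| = c (in particular e∩V_2 ≠ ∅). Then 0 is an eigenvalue of the signless Laplacian Q(H). -/
import Mathlib


open Matrix BigOperators Finset Polynomial

variable {V : Type*} [Fintype V] [DecidableEq V]

/-- Incidence matrix of a hypergraph with vertex set `V` and edge set `E`. -/
def inc (E : Finset (Finset V)) : Matrix V {e // e ∈ E} ℝ :=
  fun v e => if v ∈ (e : Finset V) then 1 else 0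

/-- Degree of a vertex: number of edges containing it. -/
def deg (E : Finset (Finset V)) (v : V) : ℕ := (E.filter (fun e => v ∈ e)).card

/-- Signless Laplacian matrix `Q = B·Bᵀ`. -/
def Qmat (E : Finset (Finset V)) : Matrix V V ℝ := inc E * (inc E)ᵀ

theorem balanced_partially_bipartite_zero_eigenvalue (k : ℕ) (E : Finset (Finset V))
    (hk : ∀ e ∈ E, e.card = k)
    (V₀ V₁ V₂ : Finset V)
    (hcover : ∀ v : V, v ∈ V₀ ∨ v ∈ V₁ ∨ v ∈ V₂)
    (h01 : Disjoint V₀ V₁) (h02 : Disjoint V₀ V₂) (h12 : Disjoint V₁ V₂)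
    (hV₁ : V₁.Nonempty) (hV₂ : V₂.Nonempty)
    (c : ℝ) (hc : 0 < c)
    (hbal : ∀ e ∈ E, ¬ e ⊆ V₀ →
      (e ∩ V₂).Nonempty ∧ ((e ∩ V₁).card : ℝ) = c * ((e ∩ V₂).card : ℝ)) :
    ∃ x : V → ℝ, x ≠ 0 ∧ Qmat E *ᵥ x = 0 := by
  set x : V → ℝ := fun v => if v ∈ V₁ then 1 else if v ∈ V₂ then -c else 0 with hx
  refine ⟨x, ?_, ?_⟩
  · obtain ⟨v, hv⟩ := hV₁
    intro h
    have := congrFun h v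
    simp [hx, hv] at this
  · have hsum : ∀ e ∈ E, ∑ u ∈ e, x u = 0 := by
      intro e he
      have hxsum : ∑ u ∈ e, x u = ((e ∩ V₁).card : ℝ) - c * ((e ∩ V₂).card : ℝ) := by
        rw [← Finset.sum_filter_add_sum_filter_not e (· ∈ V₁)]
        have h1 : e.filter (· ∈ V₁) = e ∩ V₁ := by
          ext u; simp [Finset.mem_inter]
        have h2 : (e.filter (fun u => ¬ u ∈ V₁)).filter (· ∈ V₂) = e ∩ V₂ := by
          ext u
          simp only [Finset.mem_filter, Finset.mem_inter]
          constructor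
          · tauto
          · rintro ⟨hu, hu2⟩
            exact ⟨⟨hu, fun hu1 => Finset.disjoint_left.mp h12 hu1 hu2⟩, hu2⟩
        have e1 : ∑ u ∈ e.filter (· ∈ V₁), x u = ((e ∩ V₁).card : ℝ) := by
          have : ∀ u ∈ e.filter (· ∈ V₁), x u = 1 := by
            intro u hu
            simp only [Finset.mem_filter] at hu
            simp [hx, hu.2]
          rw [Finset.sum_congr rfl this, h1, Finset.sum_const, nsmul_eq_mul, mul_one]
        have e2 : ∑ u ∈ e.filter (fun u => ¬ u ∈ V₁), x u = -(c * ((e ∩ V₂).card : ℝ)) := by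
          rw [← Finset.sum_filter_add_sum_filter_not (e.filter (fun u => ¬ u ∈ V₁)) (· ∈ V₂)]
          have e3 : ∑ u ∈ (e.filter (fun u => ¬ u ∈ V₁)).filter (· ∈ V₂), x u
              = -(c * ((e ∩ V₂).card : ℝ)) := by
            have : ∀ u ∈ (e.filter (fun u => ¬ u ∈ V₁)).filter (· ∈ V₂), x u = -c := by
              intro u hu
              simp only [Finset.mem_filter] at hu
              simp [hx, hu.1.2, hu.2]
            rw [Finset.sum_congr rfl this, h2, Finset.sum_const, nsmul_eq_mul]
            ring
          have e4 : ∑ u ∈ (e.filter (fun u => ¬ u ∈ V₁)).filter (fun u => ¬ u ∈ V₂), x u = 0 := by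
            apply Finset.sum_eq_zero
            intro u hu
            simp only [Finset.mem_filter] at hu
            simp [hx, hu.1.2, hu.2]
          rw [e3, e4, add_zero]
        rw [e1, e2]; ring
      by_cases h0 : e ⊆ V₀
      · have h1 : e ∩ V₁ = ∅ := by
          rw [Finset.eq_empty_iff_forall_notMem]
          intro u hu
          rw [Finset.mem_inter] at hu
          exact Finset.disjoint_left.mp h01 (h0 hu.1) hu.2
        have h2 : e ∩ V₂ = ∅ := by
          rw [Finset.eq_empty_iff_forall_notMem]
          intro u hu
          rw [Finset.mem_inter] at hu
          exact Finset.disjoint_left.mp h02 (h0 hu.1) hu.2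
        rw [hxsum, h1, h2]; simp
      · obtain ⟨-, hb⟩ := hbal e he h0
        rw [hxsum, hb]; ring
    have hBx : (inc E)ᵀ *ᵥ x = 0 := by
      funext f
      simp only [Matrix.mulVec, dotProduct, Matrix.transpose_apply, inc, Pi.zero_apply]
      have : ∑ u, (if u ∈ (f : Finset V) then (1:ℝ) else 0) * x u
          = ∑ u ∈ (f : Finset V), x u := by
        rw [← Finset.sum_filter_add_sum_filter_not Finset.univ (· ∈ (f : Finset V))]
        have ha : ∀ u ∈ Finset.univ.filter (· ∈ (f : Finset V)),
            (if u ∈ (f : Finset V) then (1:ℝ) else 0) * x u = x u := by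
          intro u hu
          simp only [Finset.mem_filter] at hu
          simp [hu.2]
        have hb : ∑ u ∈ Finset.univ.filter (fun u => ¬ u ∈ (f : Finset V)),
            (if u ∈ (f : Finset V) then (1:ℝ) else 0) * x u = 0 := by
          apply Finset.sum_eq_zero
          intro u hu
          simp only [Finset.mem_filter] at hu
          simp [hu.2]
        rw [Finset.sum_congr rfl ha, hb, add_zero]
        exact Finset.sum_congr (by ext u; simp) (fun u hu => rfl)
      rw [this]
      exact hsum f f.2
    rw [Qmat, ← Matrix.mulVec_mulVec, hBx, Matrix.mulVec_zero]
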